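/- arXiv:2104.02295 — 2 statements merged into one kernel-verified Lean document; each statement's English description precedes it below -/
import Mathlib

section
/- For every T > 0 and δ ∈ (0, 1/4) there is a constant K = K(T, δ) such that for all 0 < s < r < t ≤ T and all x, z ∈ ℝ: [p_{r-s}(x - z) - p_{t-s}(x - z)]² ≤ K (t - r)^δ (r - s)^{-3δ/2} [p_{r-s}(x - z)^{2-δ} + p_{t-s}(x - z)^{2-δ}]. -/
open Real MeasureTheory

noncomputable def heatKernel (t x : ℝ) : ℝ :=
  (2 * π * t) ^ (-(1:ℝ)/2) * Real.exp (-x^2 / (2*t))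

lemma heatKernel_pos {t : ℝ} (ht : 0 < t) (x : ℝ) : 0 < heatKernel t x := by
  unfold heatKernel
  have : (0:ℝ) < 2 * π * t := by positivity
  positivity

lemma heatKernel_hasDerivAt (x : ℝ) {t : ℝ} (ht : 0 < t) :
    HasDerivAt (fun τ => heatKernel τ x)
      (heatKernel t x * (x^2/(2*t^2) - 1/(2*t))) t := by
  have hπt : (0:ℝ) < 2 * π * t := by positivity
  have h1 : HasDerivAt (fun τ : ℝ => (2 * π * τ) ^ (-(1:ℝ)/2))
      (2 * π * (-(1:ℝ)/2) * (2 * π * t) ^ (-(1:ℝ)/2 - 1)) t := by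
    have hid : HasDerivAt (fun τ : ℝ => 2 * π * τ) (2 * π) t := by
      simpa using (hasDerivAt_id t).const_mul (2 * π)
    simpa [mul_comm, mul_assoc, mul_left_comm] using
      hid.rpow_const (p := -(1:ℝ)/2) (Or.inl hπt.ne')
  have h2 : HasDerivAt (fun τ : ℝ => Real.exp (-x^2 / (2*τ)))
      (Real.exp (-x^2 / (2*t)) * (x^2 / (2*t^2))) t := by
    have hinner : HasDerivAt (fun τ : ℝ => -x^2 / (2*τ)) (x^2 / (2*t^2)) t := by
      have : HasDerivAt (fun τ : ℝ => (-x^2/2) * τ⁻¹) ((-x^2/2) * (-(t^2)⁻¹)) t :=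
        (hasDerivAt_inv ht.ne').const_mul ((-x^2)/2)
      have heq : (fun τ : ℝ => (-x^2/2) * τ⁻¹) = fun τ : ℝ => -x^2 / (2*τ) := by
        funext τ; field_simp
      rw [heq] at this
      convert this using 1
      field_simp
    simpa [mul_comm] using hinner.exp
  have := h1.mul h2
  convert this using 1
  all_goals try rfl
  have key : (2 * π * t) ^ (-(1:ℝ)/2 - 1)
      = (2 * π * t) ^ (-(1:ℝ)/2) * (2 * π * t)⁻¹ := by
    rw [Real.rpow_sub hπt, Real.rpow_one]; ring
  unfold heatKernel
  rw [key]
  field_simp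
  ring

lemma mul_exp_neg_le_half {c : ℝ} (hc : 0 ≤ c) : c * Real.exp (-c) ≤ 1/2 := by
  have h := Real.add_one_le_exp (c/2)
  have hsq : Real.exp (c/2) * Real.exp (c/2) = Real.exp c := by
    rw [← Real.exp_add]; ring_nf
  have h2 : 2 * c ≤ Real.exp c := by nlinarith [sq_nonneg (c/2 - 1), Real.exp_pos (c/2)]
  have hec := Real.exp_pos c
  rw [Real.exp_neg, ← div_eq_mul_inv, div_le_iff₀ hec]
  linarith

lemma heatKernel_deriv_bound {t : ℝ} (ht : 0 < t) (x : ℝ) :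
    |heatKernel t x * (x^2/(2*t^2) - 1/(2*t))| ≤ t ^ (-(3:ℝ)/2) := by
  have hK := heatKernel_pos ht x
  set c : ℝ := x^2 / (2*t) with hc
  have hc0 : 0 ≤ c := by positivity
  have habs : |x^2/(2*t^2) - 1/(2*t)| ≤ (c + 1/2) / t := by
    have hrw : (c + 1/2)/t = x^2/(2*t^2) + 1/(2*t) := by
      rw [hc]; field_simp
    rw [abs_sub_le_iff, hrw]
    have h1 : (0:ℝ) < 1/(2*t) := by positivity
    have h2 : (0:ℝ) ≤ x^2/(2*t^2) := by positivity
    constructor <;> linarith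
  calc |heatKernel t x * (x^2/(2*t^2) - 1/(2*t))|
      = heatKernel t x * |x^2/(2*t^2) - 1/(2*t)| := by
        rw [abs_mul, abs_of_pos hK]
    _ ≤ heatKernel t x * ((c + 1/2) / t) :=
        mul_le_mul_of_nonneg_left habs hK.le
    _ ≤ t ^ (-(3:ℝ)/2) := by
        unfold heatKernel
        have hE : Real.exp (-x^2/(2*t)) * (c + 1/2) ≤ 1 := by
          have h1 : Real.exp (-x^2/(2*t)) = Real.exp (-c) := by rw [hc]; ring_nf
          rw [h1]
          have h2 := mul_exp_neg_le_half hc0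
          have h3 : Real.exp (-c) ≤ 1 := by
            rw [Real.exp_le_one_iff]; linarith
          nlinarith [Real.exp_pos (-c)]
        have hbase : (0:ℝ) < 2 * π * t := by positivity
        have hmono : (2 * π * t) ^ (-(1:ℝ)/2) ≤ t ^ (-(1:ℝ)/2) := by
          apply Real.rpow_le_rpow_of_nonpos ht _ (by norm_num)
          nlinarith [Real.pi_gt_three]
        have hsplit : t ^ (-(1:ℝ)/2) * t⁻¹ = t ^ (-(3:ℝ)/2) := by
          rw [← Real.rpow_neg_one t, ← Real.rpow_add ht]; norm_num
        have hp : (0:ℝ) < (2 * π * t) ^ (-(1:ℝ)/2) := Real.rpow_pos_of_pos hbase _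
        have htp : (0:ℝ) < t ^ (-(1:ℝ)/2) := Real.rpow_pos_of_pos ht _
        calc (2 * π * t) ^ (-(1:ℝ)/2) * Real.exp (-x^2/(2*t)) * ((c + 1/2) / t)
            = (2 * π * t) ^ (-(1:ℝ)/2) * (Real.exp (-x^2/(2*t)) * (c + 1/2)) * t⁻¹ := by
              ring
          _ ≤ (2 * π * t) ^ (-(1:ℝ)/2) * 1 * t⁻¹ := by
              apply mul_le_mul_of_nonneg_right _ (by positivity)
              exact mul_le_mul_of_nonneg_left hE hp.le
          _ ≤ t ^ (-(1:ℝ)/2) * t⁻¹ := by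
              rw [mul_one]
              exact mul_le_mul_of_nonneg_right hmono (by positivity)
          _ = t ^ (-(3:ℝ)/2) := hsplit

lemma heatKernel_time_lipschitz {a b : ℝ} (ha : 0 < a) (hab : a ≤ b) (x : ℝ) :
    |heatKernel a x - heatKernel b x| ≤ a ^ (-(3:ℝ)/2) * (b - a) := by
  have key : ‖heatKernel b x - heatKernel a x‖ ≤ a ^ (-(3:ℝ)/2) * ‖b - a‖ := by
    apply Convex.norm_image_sub_le_of_norm_hasDerivWithin_le
      (f := fun τ => heatKernel τ x)
      (f' := fun τ => heatKernel τ x * (x^2/(2*τ^2) - 1/(2*τ)))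
      (s := Set.Icc a b)
      (fun τ hτ => (heatKernel_hasDerivAt x (lt_of_lt_of_le ha hτ.1)).hasDerivWithinAt)
      (fun τ hτ => ?_) (convex_Icc a b) (Set.left_mem_Icc.2 hab) (Set.right_mem_Icc.2 hab)
    have hτ0 : 0 < τ := lt_of_lt_of_le ha hτ.1
    calc ‖heatKernel τ x * (x^2/(2*τ^2) - 1/(2*τ))‖
        ≤ τ ^ (-(3:ℝ)/2) := heatKernel_deriv_bound hτ0 x
      _ ≤ a ^ (-(3:ℝ)/2) := Real.rpow_le_rpow_of_nonpos ha hτ.1 (by norm_num)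
  rw [abs_sub_comm]
  simpa [abs_of_nonneg (sub_nonneg.2 hab)] using key

lemma main_aux {a b δ : ℝ} (ha : 0 < a) (hab : a < b) (hδ0 : 0 < δ) (hδ1 : δ < 1/4) (u : ℝ) :
    (heatKernel a u - heatKernel b u)^2
      ≤ 4 * (b - a) ^ δ * a ^ (-(3*δ)/2) *
        (heatKernel a u ^ (2 - δ) + heatKernel b u ^ (2 - δ)) := by
  have hP1 := heatKernel_pos ha u
  have hP2 := heatKernel_pos (ha.trans hab) u
  set P1 := heatKernel a u
  set P2 := heatKernel b u
  set D := P1 - P2 with hD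
  have hD1 : |D| ≤ P1 + P2 := by
    rw [abs_le]; constructor <;> [nlinarith; nlinarith]
  have hD2 : |D| ≤ a ^ (-(3:ℝ)/2) * (b - a) := heatKernel_time_lipschitz ha hab.le u
  have h2δ : (0:ℝ) ≤ 2 - δ := by linarith
  have hsum : (0:ℝ) ≤ P1 ^ (2 - δ) + P2 ^ (2 - δ) := by positivity
  have hmax : (P1 + P2) ^ ((2:ℝ) - δ) ≤ 4 * (P1 ^ (2 - δ) + P2 ^ (2 - δ)) := by
    have h2two : ((2:ℝ)) ^ ((2:ℝ) - δ) ≤ 4 := by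
      calc ((2:ℝ)) ^ ((2:ℝ) - δ) ≤ (2:ℝ) ^ (2:ℝ) :=
            Real.rpow_le_rpow_of_exponent_le one_le_two (by linarith)
        _ = 4 := by
            rw [show (2:ℝ) = ((2:ℕ):ℝ) from by norm_num, Real.rpow_natCast]; norm_num
    rcases le_total P1 P2 with h | h
    · calc (P1 + P2) ^ ((2:ℝ) - δ) ≤ (2 * P2) ^ ((2:ℝ) - δ) :=
            Real.rpow_le_rpow (by linarith) (by linarith) h2δ
        _ = (2:ℝ) ^ ((2:ℝ) - δ) * P2 ^ ((2:ℝ) - δ) :=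
            Real.mul_rpow (by norm_num) hP2.le
        _ ≤ 4 * (P1 ^ (2 - δ) + P2 ^ (2 - δ)) := by
            have hp1 : (0:ℝ) ≤ P1 ^ ((2:ℝ) - δ) := by positivity
            have hp2 : (0:ℝ) ≤ P2 ^ ((2:ℝ) - δ) := by positivity
            nlinarith
    · calc (P1 + P2) ^ ((2:ℝ) - δ) ≤ (2 * P1) ^ ((2:ℝ) - δ) :=
            Real.rpow_le_rpow (by linarith) (by linarith) h2δ
        _ = (2:ℝ) ^ ((2:ℝ) - δ) * P1 ^ ((2:ℝ) - δ) :=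
            Real.mul_rpow (by norm_num) hP1.le
        _ ≤ 4 * (P1 ^ (2 - δ) + P2 ^ (2 - δ)) := by
            have hp1 : (0:ℝ) ≤ P1 ^ ((2:ℝ) - δ) := by positivity
            have hp2 : (0:ℝ) ≤ P2 ^ ((2:ℝ) - δ) := by positivity
            nlinarith
  have hL : (a ^ (-(3:ℝ)/2) * (b - a)) ^ δ = (b - a) ^ δ * a ^ (-(3*δ)/2) := by
    rw [Real.mul_rpow (by positivity) (by linarith), ← Real.rpow_mul ha.le,
      show (-(3:ℝ)/2) * δ = -(3*δ)/2 from by ring, mul_comm]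
  rcases eq_or_lt_of_le (abs_nonneg D) with h0 | hDpos
  · have : D = 0 := by simpa using h0.symm
    rw [this]
    have h1 : (0:ℝ) ≤ (b - a) ^ δ := Real.rpow_nonneg (by linarith) δ
    have h2 : (0:ℝ) ≤ a ^ (-(3*δ)/2) := Real.rpow_nonneg ha.le _
    have : (0:ℝ)^2 = 0 := by norm_num
    rw [this]
    exact mul_nonneg (mul_nonneg (mul_nonneg (by norm_num) h1) h2) hsum
  have hsq : D ^ 2 = |D| ^ ((2:ℝ) - δ) * |D| ^ δ := by
    rw [← Real.rpow_add hDpos,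
      show (2:ℝ) - δ + δ = ((2:ℕ):ℝ) from by push_cast; ring,
      Real.rpow_natCast, sq_abs]
  calc D ^ 2 = |D| ^ ((2:ℝ) - δ) * |D| ^ δ := hsq
    _ ≤ (P1 + P2) ^ ((2:ℝ) - δ) * ((a ^ (-(3:ℝ)/2) * (b - a)) ^ δ) := by
        apply mul_le_mul (Real.rpow_le_rpow (abs_nonneg D) hD1 h2δ)
          (Real.rpow_le_rpow (abs_nonneg D) hD2 hδ0.le)
          (Real.rpow_nonneg (abs_nonneg D) δ) (Real.rpow_nonneg (by linarith : (0:ℝ) ≤ P1 + P2) _)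
    _ ≤ (4 * (P1 ^ (2 - δ) + P2 ^ (2 - δ))) * ((a ^ (-(3:ℝ)/2) * (b - a)) ^ δ) := by
        apply mul_le_mul_of_nonneg_right hmax (Real.rpow_nonneg (mul_nonneg (Real.rpow_nonneg ha.le _) (by linarith)) δ)
    _ = 4 * (b - a) ^ δ * a ^ (-(3*δ)/2) * (P1 ^ (2 - δ) + P2 ^ (2 - δ)) := by
        rw [hL]; ring

theorem heat_pointwise_interpolation (T δ : ℝ) (hT : 0 < T) (hδ : δ ∈ Set.Ioo (0:ℝ) (1/4)) :
    ∃ K : ℝ, 0 ≤ K ∧ ∀ s r t x z : ℝ, 0 < s → s < r → r < t → t ≤ T →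
      (heatKernel (r - s) (x - z) - heatKernel (t - s) (x - z))^2
        ≤ K * (t - r) ^ δ * (r - s) ^ (-(3 * δ) / 2) *
          ((heatKernel (r - s) (x - z)) ^ (2 - δ) + (heatKernel (t - s) (x - z)) ^ (2 - δ)) := by
  refine ⟨4, by norm_num, fun s r t x z hs hsr hrt htT => ?_⟩
  have := main_aux (a := r - s) (b := t - s) (δ := δ)
    (by linarith) (by linarith) hδ.1 hδ.2 (x - z)
  have he : t - s - (r - s) = t - r := by ring
  rw [he] at this
  exact this
end

section
/- Let Φ ∈ C_c²(0,1) with 0 ≤ Φ ≤ 2 and ∫_0^1 Φ = 1, and h_k(x) = (∫_0^{kx} Φ)·(∫_{x^k}^1 Φ). If f ∈ C[0,1] and the one-sided derivatives f'(0) and f'(1) exist, then lim_{k→∞} ∫_0^1 f(x) h_k''(x) dx = f'(1) − f'(0). -/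
open Real MeasureTheory Filter intervalIntegral

open Topology

section Auxiliary

lemma tendsto_near0 (f ψ : ℝ → ℝ) (M' d0 : ℝ) (hψc : Continuous ψ)
    (hψbd : ∀ t, |ψ t| ≤ M')
    (hψ1 : ∀ t : ℝ, 1 ≤ t → ψ t = 0)
    (hf : ContinuousOn f (Set.Icc (0:ℝ) 1))
    (hf0 : HasDerivWithinAt f d0 (Set.Ici (0:ℝ)) 0)
    (hI1 : ∀ᶠ k : ℕ in atTop, (∫ x in (0:ℝ)..(1/2), (k:ℝ)^2 * ψ ((k:ℝ)*x)) = 0)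
    (hI2 : ∀ᶠ k : ℕ in atTop, (∫ x in (0:ℝ)..(1/2), x * ((k:ℝ)^2 * ψ ((k:ℝ)*x))) = -1) :
    Tendsto (fun k : ℕ => ∫ x in (0:ℝ)..(1/2), f x * ((k:ℝ)^2 * ψ ((k:ℝ)*x))) atTop
      (𝓝 (-d0)) := by
  set r : ℝ → ℝ := fun x => f x - f 0 - d0 * x with hrdef
  have hsub : Set.Icc (0:ℝ) (1/2) ⊆ Set.Icc 0 1 := Set.Icc_subset_Icc le_rfl (by norm_num)
  have hrc : ContinuousOn r (Set.Icc (0:ℝ) 1) := by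
    apply (hf.sub continuousOn_const).sub
    exact (continuous_const.mul continuous_id).continuousOn
  have huc : ∀ k : ℕ, Continuous fun x : ℝ => (k:ℝ)^2 * ψ ((k:ℝ)*x) := by
    intro k; exact continuous_const.mul (hψc.comp (continuous_const.mul continuous_id))
  have hri : ∀ (k : ℕ) (a b : ℝ), a ∈ Set.Icc (0:ℝ) 1 → b ∈ Set.Icc (0:ℝ) 1 →
      IntervalIntegrable (fun x => r x * ((k:ℝ)^2 * ψ ((k:ℝ)*x))) volume a b := by
    intro k a b ha hb
    apply ContinuousOn.intervalIntegrable
    apply (hrc.mono _).mul (huc k).continuousOn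
    exact Set.uIcc_subset_Icc ha hb
  have hdecomp : ∀ k : ℕ, (∫ x in (0:ℝ)..(1/2), f x * ((k:ℝ)^2 * ψ ((k:ℝ)*x)))
      = f 0 * (∫ x in (0:ℝ)..(1/2), (k:ℝ)^2 * ψ ((k:ℝ)*x))
        + d0 * (∫ x in (0:ℝ)..(1/2), x * ((k:ℝ)^2 * ψ ((k:ℝ)*x)))
        + (∫ x in (0:ℝ)..(1/2), r x * ((k:ℝ)^2 * ψ ((k:ℝ)*x))) := by
    intro k
    rw [← intervalIntegral.integral_const_mul, ← intervalIntegral.integral_const_mul, ← intervalIntegral.integral_add, ← intervalIntegral.integral_add]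
    · apply integral_congr
      intro x _
      simp only [r]; ring
    · exact ((continuous_const.mul (huc k)).add
        (continuous_const.mul (continuous_id.mul (huc k)))).intervalIntegrable _ _
    · exact hri k 0 (1/2) (by norm_num) (by norm_num)
    · exact (continuous_const.mul (huc k)).intervalIntegrable _ _
    · exact (continuous_const.mul (continuous_id.mul (huc k))).intervalIntegrable _ _
  have hR0 : Tendsto (fun k : ℕ => ∫ x in (0:ℝ)..(1/2), r x * ((k:ℝ)^2 * ψ ((k:ℝ)*x)))
      atTop (𝓝 0) := by
    rw [NormedAddCommGroup.tendsto_nhds_zero]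
    intro ε hε
    have hM'0 : 0 ≤ M' := le_trans (abs_nonneg _) (hψbd 0)
    set ε' := ε / (M' + 1) with hε'def
    have hε' : 0 < ε' := div_pos hε (by linarith)
    have hlo := (hasDerivWithinAt_iff_isLittleO.mp hf0).def hε'
    rw [eventually_nhdsWithin_iff, Metric.eventually_nhds_iff] at hlo
    obtain ⟨δ, hδpos, hδ⟩ := hlo
    have hr_bound : ∀ y : ℝ, 0 ≤ y → y < δ → |r y| ≤ ε' * y := by
      intro y hy0 hyδ
      have h := hδ (show dist y 0 < δ by simpa [Real.dist_eq, abs_of_nonneg hy0]) hy0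
      simp only [sub_zero, smul_eq_mul, Real.norm_eq_abs] at h
      calc |r y| = |f y - f 0 - y * d0| := by rw [hrdef]; ring_nf
        _ ≤ ε' * |y| := h
        _ = ε' * y := by rw [abs_of_nonneg hy0]
    filter_upwards [eventually_ge_atTop 2,
      tendsto_one_div_atTop_nhds_zero_nat.eventually (gt_mem_nhds hδpos)] with k hk2 hkδ
    have hk0 : (0:ℝ) < k := by exact_mod_cast (by omega : 0 < k)
    have hk2' : (2:ℝ) ≤ k := by exact_mod_cast hk2
    have hk12 : (1:ℝ)/k ≤ 1/2 := by
      apply one_div_le_one_div_of_le <;> norm_num [hk2']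
    have hk1 : (1:ℝ)/k ≤ 1 := by linarith
    have h1k0 : (0:ℝ) ≤ 1/k := by positivity
    rw [← integral_add_adjacent_intervals (a := (0:ℝ)) (b := 1/(k:ℝ)) (c := 1/2)
      (hri k 0 (1/(k:ℝ)) (by norm_num) (by constructor <;> linarith))
      (hri k (1/(k:ℝ)) (1/2) (by constructor <;> linarith) (by norm_num))]
    have h2zero : (∫ x in (1/(k:ℝ))..(1/2), r x * ((k:ℝ)^2 * ψ ((k:ℝ)*x))) = 0 := by
      rw [show (0:ℝ) = ∫ x in (1/(k:ℝ))..(1/2), (0:ℝ) by simp]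
      apply integral_congr
      intro x hx
      rw [Set.uIcc_of_le hk12] at hx
      have h1 : (1:ℝ) ≤ (k:ℝ) * x := by
        have : (1:ℝ)/k ≤ x := hx.1
        calc (1:ℝ) = k * (1/k) := by field_simp
          _ ≤ k * x := by apply mul_le_mul_of_nonneg_left this (le_of_lt hk0)
      simp [hψ1 _ h1]
    rw [h2zero, add_zero]
    have hnb : ‖∫ x in (0:ℝ)..(1/(k:ℝ)), r x * ((k:ℝ)^2 * ψ ((k:ℝ)*x))‖
        ≤ |∫ x in (0:ℝ)..(1/(k:ℝ)), (ε' * M' * (k:ℝ)^2) * x| := by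
      apply intervalIntegral.norm_integral_le_abs_of_norm_le
      · rw [ae_restrict_iff' measurableSet_uIoc]
        apply Filter.Eventually.of_forall
        intro t ht
        rw [Set.uIoc_of_le h1k0] at ht
        have ht0 : 0 < t := ht.1
        have htδ : t < δ := lt_of_le_of_lt ht.2 hkδ
        have h1 : |r t| ≤ ε' * t := hr_bound t ht0.le htδ
        have h2 : |(k:ℝ)^2 * ψ ((k:ℝ)*t)| ≤ (k:ℝ)^2 * M' := by
          rw [abs_mul, abs_of_nonneg (by positivity : (0:ℝ) ≤ (k:ℝ)^2)]
          exact mul_le_mul_of_nonneg_left (hψbd _) (by positivity)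
        rw [Real.norm_eq_abs, abs_mul]
        calc |r t| * |(k:ℝ)^2 * ψ ((k:ℝ)*t)| ≤ (ε' * t) * ((k:ℝ)^2 * M') := by
              apply mul_le_mul h1 h2 (abs_nonneg _) (by positivity)
          _ = (ε' * M' * (k:ℝ)^2) * t := by ring
      · exact (continuous_const.mul continuous_id).intervalIntegrable _ _
    rw [intervalIntegral.integral_const_mul, integral_id] at hnb
    have hval : (ε' * M' * (k:ℝ)^2) * (((1/(k:ℝ))^2 - 0^2)/2) = ε' * M' / 2 := by
      field_simp; ring
    rw [hval, abs_of_nonneg (by positivity : (0:ℝ) ≤ ε' * M' / 2)] at hnb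
    calc ‖∫ x in (0:ℝ)..(1/(k:ℝ)), r x * ((k:ℝ)^2 * ψ ((k:ℝ)*x))‖ ≤ ε' * M' / 2 := hnb
      _ < ε := by
        rw [hε'def, div_mul_eq_mul_div, div_div]
        rw [div_lt_iff₀ (by linarith : (0:ℝ) < (M' + 1) * 2)]
        nlinarith
  have hlim : Tendsto (fun k : ℕ => -d0 + (∫ x in (0:ℝ)..(1/2), r x * ((k:ℝ)^2 * ψ ((k:ℝ)*x))))
      atTop (𝓝 (-d0)) := by
    have := tendsto_const_nhds (x := -d0) (f := atTop (α := ℕ)) |>.add hR0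
    simpa using this
  apply hlim.congr'
  filter_upwards [hI1, hI2] with k h1 h2
  rw [hdecomp k, h1, h2]
  ring


noncomputable def G2fun (Φ ψ : ℝ → ℝ) (k : ℕ) (x : ℝ) : ℝ :=
  (k:ℝ)*((k:ℝ)-1)*x^(k-2)*Φ (x^k) + (k:ℝ)^2*x^(2*k-2)*ψ (x^k)

lemma G2cont (Φ ψ : ℝ → ℝ) (k : ℕ) (hΦc : Continuous Φ) (hψc : Continuous ψ) :
    Continuous (G2fun Φ ψ k) := by
  unfold G2fun; fun_prop

set_option maxHeartbeats 1000000 in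
lemma tendsto_near1 (f Φ ψ : ℝ → ℝ) (M M' d1 εs : ℝ) (hεs : 0 < εs)
    (hΦc : Continuous Φ) (hψc : Continuous ψ)
    (hΦbd : ∀ t, |Φ t| ≤ M) (hψbd : ∀ t, |ψ t| ≤ M')
    (hΦ0 : ∀ t : ℝ, t ≤ εs → Φ t = 0) (hψ0 : ∀ t : ℝ, t ≤ εs → ψ t = 0)
    (hf : ContinuousOn f (Set.Icc (0:ℝ) 1))
    (hf1 : HasDerivWithinAt f d1 (Set.Iic (1:ℝ)) 1)
    (hJ0 : ∀ᶠ k : ℕ in atTop, (∫ x in (1/2:ℝ)..1, G2fun Φ ψ k x) = 0)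
    (hJ1 : ∀ᶠ k : ℕ in atTop, (∫ x in (1/2:ℝ)..1, (x-1) * G2fun Φ ψ k x) = -1) :
    Tendsto (fun k : ℕ => ∫ x in (1/2:ℝ)..1, f x * (-(G2fun Φ ψ k x))) atTop (𝓝 d1) := by
  have hM0 : 0 ≤ M := le_trans (abs_nonneg _) (hΦbd 0)
  have hM'0 : 0 ≤ M' := le_trans (abs_nonneg _) (hψbd 0)
  set r : ℝ → ℝ := fun x => f x - f 1 - d1 * (x - 1) with hrdef
  have hrc : ContinuousOn r (Set.Icc (0:ℝ) 1) := by
    apply (hf.sub continuousOn_const).sub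
    exact (continuous_const.mul (continuous_id.sub continuous_const)).continuousOn
  have hri : ∀ (k : ℕ) (a b : ℝ), a ∈ Set.Icc (0:ℝ) 1 → b ∈ Set.Icc (0:ℝ) 1 →
      IntervalIntegrable (fun x => r x * G2fun Φ ψ k x) volume a b := by
    intro k a b ha hb
    apply ContinuousOn.intervalIntegrable
    apply (hrc.mono (Set.uIcc_subset_Icc ha hb)).mul (G2cont Φ ψ k hΦc hψc).continuousOn
  have hdecomp : ∀ k : ℕ, (∫ x in (1/2:ℝ)..1, f x * (-(G2fun Φ ψ k x)))
      = -((f 1 * (∫ x in (1/2:ℝ)..1, G2fun Φ ψ k x)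
        + d1 * (∫ x in (1/2:ℝ)..1, (x-1) * G2fun Φ ψ k x))
        + (∫ x in (1/2:ℝ)..1, r x * G2fun Φ ψ k x)) := by
    intro k
    rw [← intervalIntegral.integral_const_mul, ← intervalIntegral.integral_const_mul,
      ← intervalIntegral.integral_add, ← intervalIntegral.integral_add, ← intervalIntegral.integral_neg]
    · apply integral_congr
      intro x _
      simp only [r]; ring
    · exact ((continuous_const.mul (G2cont Φ ψ k hΦc hψc)).add
        (continuous_const.mul ((continuous_id.sub continuous_const).mul
          (G2cont Φ ψ k hΦc hψc)))).intervalIntegrable _ _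
    · exact hri k (1/2) 1 (by norm_num) (by norm_num)
    · exact (continuous_const.mul (G2cont Φ ψ k hΦc hψc)).intervalIntegrable _ _
    · exact (continuous_const.mul ((continuous_id.sub continuous_const).mul
        (G2cont Φ ψ k hΦc hψc))).intervalIntegrable _ _
  have hR0 : Tendsto (fun k : ℕ => ∫ x in (1/2:ℝ)..1, r x * G2fun Φ ψ k x) atTop (𝓝 0) := by
    rw [NormedAddCommGroup.tendsto_nhds_zero]
    intro ε hε
    set ε' := ε / (M + M' + 1) with hε'def
    have hε' : 0 < ε' := div_pos hε (by linarith)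
    have hlo := (hasDerivWithinAt_iff_isLittleO.mp hf1).def hε'
    rw [eventually_nhdsWithin_iff, Metric.eventually_nhds_iff] at hlo
    obtain ⟨δ₀, hδ₀pos, hδ₀⟩ := hlo
    set δ := min δ₀ (1/2) with hδdef
    have hδpos : 0 < δ := lt_min hδ₀pos (by norm_num)
    have hδhalf : δ ≤ 1/2 := min_le_right _ _
    have hδδ₀ : δ ≤ δ₀ := min_le_left _ _
    have hr_bound : ∀ y : ℝ, 1 - δ < y → y ≤ 1 → |r y| ≤ ε' * (1 - y) := by
      intro y hy1 hy2
      have hdist : dist y 1 < δ₀ := by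
        rw [Real.dist_eq, abs_of_nonpos (by linarith)]
        linarith
      have h := hδ₀ hdist (Set.mem_Iic.mpr hy2)
      simp only [smul_eq_mul, Real.norm_eq_abs] at h
      calc |r y| = |f y - f 1 - (y - 1) * d1| := by rw [hrdef]; ring_nf
        _ ≤ ε' * |y - 1| := h
        _ = ε' * (1 - y) := by rw [abs_of_nonpos (by linarith)]; ring
    have hpow : Tendsto (fun k : ℕ => (1 - δ)^k) atTop (𝓝 0) :=
      tendsto_pow_atTop_nhds_zero_of_lt_one (by linarith) (by linarith)
    filter_upwards [eventually_ge_atTop 2, hpow.eventually (gt_mem_nhds hεs)] with k hk2 hkε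
    have hk2' : (2:ℝ) ≤ k := by exact_mod_cast hk2
    have h121δ : (1:ℝ)/2 ≤ 1 - δ := by linarith
    rw [← integral_add_adjacent_intervals (a := (1/2:ℝ)) (b := 1 - δ) (c := 1)
      (hri k (1/2) (1-δ) (by norm_num) (by constructor <;> linarith))
      (hri k (1-δ) 1 (by constructor <;> linarith) (by norm_num))]
    have h1zero : (∫ x in (1/2:ℝ)..(1-δ), r x * G2fun Φ ψ k x) = 0 := by
      rw [show (0:ℝ) = ∫ x in (1/2:ℝ)..(1-δ), (0:ℝ) by simp]
      apply integral_congr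
      intro x hx
      rw [Set.uIcc_of_le h121δ] at hx
      have hx0 : (0:ℝ) ≤ x := by linarith [hx.1]
      have hxk : x^k ≤ εs := le_of_lt (lt_of_le_of_lt (pow_le_pow_left₀ hx0 hx.2 k) hkε)
      simp [G2fun, hΦ0 _ hxk, hψ0 _ hxk]
    rw [h1zero, zero_add]
    set g : ℝ → ℝ := fun x =>
      ε' * ((1-x) * ((k:ℝ)*((k:ℝ)-1)*M*x^(k-2) + (k:ℝ)^2*M'*x^(2*k-2))) with hgdef
    have hgc : Continuous g := by fun_prop
    have hnb : ‖∫ x in (1-δ:ℝ)..1, r x * G2fun Φ ψ k x‖ ≤ |∫ x in (1-δ:ℝ)..1, g x| := by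
      apply intervalIntegral.norm_integral_le_abs_of_norm_le
      · rw [ae_restrict_iff' measurableSet_uIoc]
        apply Filter.Eventually.of_forall
        intro t ht
        rw [Set.uIoc_of_le (by linarith : 1-δ ≤ (1:ℝ))] at ht
        have ht0 : (0:ℝ) < t := by linarith [ht.1]
        have ht1 : t ≤ 1 := ht.2
        have h1 : |r t| ≤ ε' * (1 - t) := hr_bound t ht.1 ht1
        have hk1' : (0:ℝ) ≤ (k:ℝ) - 1 := by linarith
        have h2 : |G2fun Φ ψ k t| ≤ (k:ℝ)*((k:ℝ)-1)*M*t^(k-2) + (k:ℝ)^2*M'*t^(2*k-2) := by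
          unfold G2fun
          apply le_trans (abs_add_le _ _)
          apply add_le_add
          · rw [abs_mul]
            calc |(k:ℝ)*((k:ℝ)-1)*t^(k-2)| * |Φ (t^k)|
                ≤ ((k:ℝ)*((k:ℝ)-1)*t^(k-2)) * M := by
                  apply mul_le_mul _ (hΦbd _) (abs_nonneg _) (by positivity)
                  rw [abs_of_nonneg (by positivity)]
              _ = (k:ℝ)*((k:ℝ)-1)*M*t^(k-2) := by ring
          · rw [abs_mul]
            calc |(k:ℝ)^2*t^(2*k-2)| * |ψ (t^k)| ≤ ((k:ℝ)^2*t^(2*k-2)) * M' := by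
                  apply mul_le_mul _ (hψbd _) (abs_nonneg _) (by positivity)
                  rw [abs_of_nonneg (by positivity)]
              _ = (k:ℝ)^2*M'*t^(2*k-2) := by ring
        rw [Real.norm_eq_abs, abs_mul]
        calc |r t| * |G2fun Φ ψ k t|
            ≤ (ε' * (1 - t)) * ((k:ℝ)*((k:ℝ)-1)*M*t^(k-2) + (k:ℝ)^2*M'*t^(2*k-2)) := by
              have h1t : (0:ℝ) ≤ 1 - t := by linarith
              apply mul_le_mul h1 h2 (abs_nonneg _) (by positivity)
          _ = g t := by rw [hgdef]; ring
      · exact hgc.intervalIntegrable _ _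
    have hgnonneg : ∀ x ∈ Set.Ioc (0:ℝ) 1, 0 ≤ g x := by
      intro x hx
      have : (0:ℝ) ≤ (k:ℝ) - 1 := by linarith
      have hx0 := hx.1
      have hx1 := hx.2
      rw [hgdef]
      have h1x : (0:ℝ) ≤ 1 - x := by linarith
      positivity
    have hmono : (∫ x in (1-δ:ℝ)..1, g x) ≤ ∫ x in (0:ℝ)..1, g x := by
      apply intervalIntegral.integral_mono_interval (by linarith) (by linarith) le_rfl
      · rw [Filter.EventuallyLE, ae_restrict_iff' measurableSet_Ioc]
        exact Filter.Eventually.of_forall fun x hx => hgnonneg x hx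
      · exact hgc.intervalIntegrable _ _
    have hval : (∫ x in (0:ℝ)..1, g x) ≤ ε' * (M + M') := by
      have hε'0 : (0:ℝ) ≤ ε' := hε'.le
      have hksplit : (∫ x in (0:ℝ)..1, g x)
          = ε' * ((k:ℝ)*((k:ℝ)-1)*M) * (∫ x in (0:ℝ)..1, (x^(k-2) - x^(k-2+1)))
            + ε' * ((k:ℝ)^2*M') * (∫ x in (0:ℝ)..1, (x^(2*k-2) - x^(2*k-2+1))) := by
        rw [← intervalIntegral.integral_const_mul, ← intervalIntegral.integral_const_mul,
          ← intervalIntegral.integral_add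
            ((Continuous.intervalIntegrable (by fun_prop) _ _))
            ((Continuous.intervalIntegrable (by fun_prop) _ _))]
        apply integral_congr
        intro x _
        rw [hgdef]; ring
      have hmom : ∀ n : ℕ, (∫ x in (0:ℝ)..1, (x^n - x^(n+1))) = 1/((n:ℝ)+1) - 1/((n:ℝ)+2) := by
        intro n
        rw [intervalIntegral.integral_sub ((continuous_pow n).intervalIntegrable _ _)
          ((continuous_pow (n+1)).intervalIntegrable _ _), integral_pow, integral_pow]
        push_cast
        norm_num
        ring
      have e1 : ((k-2:ℕ):ℝ) = (k:ℝ) - 2 := by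
        rw [Nat.cast_sub hk2]; norm_num
      have e2 : ((2*k-2:ℕ):ℝ) = 2*(k:ℝ) - 2 := by
        rw [Nat.cast_sub (by omega : 2 ≤ 2*k)]; push_cast; ring
      rw [hksplit, hmom, hmom, e1, e2]
      have hterm1 : ε' * ((k:ℝ)*((k:ℝ)-1)*M) * (1/((k:ℝ)-2+1) - 1/((k:ℝ)-2+2)) = ε' * M := by
        have hk0 : (k:ℝ) ≠ 0 := by linarith
        have hk1 : (k:ℝ) - 2 + 1 ≠ 0 := by linarith
        have hk2'' : (k:ℝ) - 2 + 2 ≠ 0 := by linarith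
        field_simp
        ring
      have hterm2 : ε' * ((k:ℝ)^2*M') * (1/(2*(k:ℝ)-2+1) - 1/(2*(k:ℝ)-2+2)) ≤ ε' * M' := by
        have ha : (0:ℝ) < 2*(k:ℝ)-2+1 := by linarith
        have hb : (0:ℝ) < 2*(k:ℝ)-2+2 := by linarith
        have hd : 1/(2*(k:ℝ)-2+1) - 1/(2*(k:ℝ)-2+2)
            = 1/((2*(k:ℝ)-2+1)*(2*(k:ℝ)-2+2)) := by
          rw [div_sub_div _ _ (ne_of_gt ha) (ne_of_gt hb)]
          congr 1
          ring
        rw [hd, mul_one_div, div_le_iff₀ (by positivity)]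
        nlinarith [mul_nonneg (mul_nonneg hε'0 hM'0)
          (by nlinarith : (0:ℝ) ≤ 3*(k:ℝ)^2 - 2*(k:ℝ))]
      rw [hterm1, mul_add]
      exact add_le_add le_rfl hterm2
    have habs : |∫ x in (1-δ:ℝ)..1, g x| = ∫ x in (1-δ:ℝ)..1, g x := by
      apply abs_of_nonneg
      apply intervalIntegral.integral_nonneg (by linarith)
      intro x hx
      exact hgnonneg x ⟨by linarith [hx.1], hx.2⟩
    calc ‖∫ x in (1-δ:ℝ)..1, r x * G2fun Φ ψ k x‖ ≤ |∫ x in (1-δ:ℝ)..1, g x| := hnb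
      _ = ∫ x in (1-δ:ℝ)..1, g x := habs
      _ ≤ ∫ x in (0:ℝ)..1, g x := hmono
      _ ≤ ε' * (M + M') := hval
      _ < ε := by
        rw [hε'def, div_mul_eq_mul_div]
        rw [div_lt_iff₀ (by linarith : (0:ℝ) < M + M' + 1)]
        nlinarith
  have hlim : Tendsto (fun k : ℕ => -((f 1 * 0 + d1 * (-1))
      + (∫ x in (1/2:ℝ)..1, r x * G2fun Φ ψ k x))) atTop (𝓝 d1) := by
    have h := (tendsto_const_nhds (x := f 1 * 0 + d1 * (-1)) (f := atTop (α := ℕ))).add hR0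
    have h2 := h.neg
    simpa using h2
  apply hlim.congr'
  filter_upwards [hJ0, hJ1] with k h0 h1
  rw [hdecomp k, h0, h1]

end Auxiliary

noncomputable def hAux (Φ : ℝ → ℝ) (k : ℕ) (x : ℝ) : ℝ :=
  (∫ z in (0:ℝ)..(k * x), Φ z) * (∫ z in (x ^ k)..(1:ℝ), Φ z)

set_option maxHeartbeats 2000000 in
theorem pairing_second_deriv (Φ : ℝ → ℝ) (hΦsmooth : ContDiff ℝ 2 Φ)
    (hΦsupp : tsupport Φ ⊆ Set.Ioo (0:ℝ) 1)
    (hΦnonneg : ∀ x, 0 ≤ Φ x) (hΦle : ∀ x, Φ x ≤ 2)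
    (hΦint : (∫ x in (0:ℝ)..1, Φ x) = 1)
    (f : ℝ → ℝ) (hf : ContinuousOn f (Set.Icc (0:ℝ) 1))
    (d0 d1 : ℝ)
    (hf0 : HasDerivWithinAt f d0 (Set.Ici (0:ℝ)) 0)
    (hf1 : HasDerivWithinAt f d1 (Set.Iic (1:ℝ)) 1) :
    Tendsto (fun k : ℕ => ∫ x in (0:ℝ)..1, f x * deriv (deriv (hAux Φ k)) x)
      atTop (nhds (d1 - d0)) := by
  have hΦc : Continuous Φ := hΦsmooth.continuous
  set ψ : ℝ → ℝ := deriv Φ with hψdef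
  have hψc : Continuous ψ := hΦsmooth.continuous_deriv one_le_two
  have hΦ' : ∀ t, HasDerivAt Φ (ψ t) t := fun t =>
    ((hΦsmooth.differentiable two_ne_zero) t).hasDerivAt
  -- compact support and ε
  have hK : IsCompact (tsupport Φ) :=
    (isCompact_Icc (a := (0:ℝ)) (b := 1)).of_isClosed_subset (isClosed_tsupport Φ)
      (hΦsupp.trans Set.Ioo_subset_Icc_self)
  have hne : (tsupport Φ).Nonempty := by
    by_contra hemp
    rw [Set.not_nonempty_iff_eq_empty] at hemp
    have : ∀ x, Φ x = 0 := fun x =>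
      image_eq_zero_of_notMem_tsupport (by simp [hemp])
    simp [this] at hΦint
  set a := sInf (tsupport Φ) with hadef
  set b := sSup (tsupport Φ) with hbdef
  have haK : a ∈ tsupport Φ := hK.sInf_mem hne
  have hbK : b ∈ tsupport Φ := hK.sSup_mem hne
  have ha : a ∈ Set.Ioo (0:ℝ) 1 := hΦsupp haK
  have hb : b ∈ Set.Ioo (0:ℝ) 1 := hΦsupp hbK
  set ε : ℝ := min (a/2) ((1-b)/2) with hεdef
  have hε : 0 < ε := lt_min (by linarith [ha.1]) (by linarith [hb.2])
  have hεa : ε < a := lt_of_le_of_lt (min_le_left _ _) (by linarith [ha.1])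
  have hεb : b < 1 - ε := by
    have := min_le_right (a/2) ((1-b)/2)
    have hb1 := hb.2
    simp only [← hεdef] at this
    linarith
  have hΦ0 : ∀ t : ℝ, t ≤ ε → Φ t = 0 := by
    intro t ht
    apply image_eq_zero_of_notMem_tsupport
    intro hmem
    have := csInf_le hK.bddBelow hmem
    rw [← hadef] at this
    linarith
  have hΦ1 : ∀ t : ℝ, 1 - ε ≤ t → Φ t = 0 := by
    intro t ht
    apply image_eq_zero_of_notMem_tsupport
    intro hmem
    have := le_csSup hK.bddAbove hmem
    rw [← hbdef] at this
    linarith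
  have hψtsupp : ∀ t : ℝ, t ∉ tsupport Φ → ψ t = 0 := by
    intro t ht
    by_contra hc
    exact ht (support_deriv_subset (by simpa [hψdef] using hc))
  have hψ0 : ∀ t : ℝ, t ≤ ε → ψ t = 0 := by
    intro t ht
    apply hψtsupp
    intro hmem
    have := csInf_le hK.bddBelow hmem
    rw [← hadef] at this
    linarith
  have hψ1 : ∀ t : ℝ, 1 - ε ≤ t → ψ t = 0 := by
    intro t ht
    apply hψtsupp
    intro hmem
    have := le_csSup hK.bddAbove hmem
    rw [← hbdef] at this
    linarith
  -- bounds
  have hΦbd : ∀ t, |Φ t| ≤ 2 := fun t => by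
    rw [abs_of_nonneg (hΦnonneg t)]; exact hΦle t
  obtain ⟨M', hM'⟩ : ∃ M', ∀ t, |ψ t| ≤ M' := by
    have hΦcs : HasCompactSupport Φ := hK
    obtain ⟨C, hC⟩ := (hΦcs.deriv).exists_bound_of_continuous hψc
    exact ⟨C, fun t => by simpa using hC t⟩
  -- A and its properties
  set A : ℝ → ℝ := fun t => ∫ z in (0:ℝ)..t, Φ z with hAdef
  have hΦi : ∀ u v : ℝ, IntervalIntegrable Φ volume u v := fun u v =>
    hΦc.intervalIntegrable u v
  have hA : ∀ t, HasDerivAt A (Φ t) t := fun t =>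
    intervalIntegral.integral_hasDerivAt_right (hΦi 0 t)
      (hΦc.stronglyMeasurableAtFilter _ _) hΦc.continuousAt
  have hA0 : ∀ t : ℝ, t ≤ ε → A t = 0 := by
    intro t ht
    have hcg : (∫ z in (0:ℝ)..t, Φ z) = ∫ z in (0:ℝ)..t, (0:ℝ) := by
      apply integral_congr
      intro x hx
      rcases Set.mem_uIcc.mp hx with ⟨_, h2⟩ | ⟨_, h2⟩
      · exact hΦ0 x (le_trans h2 ht)
      · exact hΦ0 x (le_trans h2 hε.le)
    simp only [hAdef]
    rw [hcg]
    simp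
  have hA1 : ∀ t : ℝ, 1 - ε ≤ t → A t = 1 := by
    intro t ht
    have h2 : (∫ z in (1:ℝ)..t, Φ z) = 0 := by
      rw [show (0:ℝ) = ∫ z in (1:ℝ)..t, (0:ℝ) by simp]
      apply integral_congr
      intro x hx
      rcases Set.mem_uIcc.mp hx with ⟨h1, _⟩ | ⟨h1, _⟩
      · exact hΦ1 x (by linarith)
      · exact hΦ1 x (by linarith)
    have h3 := integral_add_adjacent_intervals (hΦi 0 1) (hΦi 1 t)
    simp only [hAdef]
    rw [← h3, hΦint, h2]
    norm_num
  have hB : ∀ t : ℝ, (∫ z in t..(1:ℝ), Φ z) = 1 - A t := by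
    intro t
    have h := (integral_interval_sub_left (hΦi 0 1) (hΦi 0 t)).symm
    rw [hΦint] at h
    simpa only [hAdef] using h
  have haA : ∀ s : ℝ, (∫ z in (0:ℝ)..s, Φ z) = A s := fun s => rfl
  -- derivative helpers
  have hlin : ∀ (k : ℕ) (x : ℝ), HasDerivAt (fun y : ℝ => (k:ℝ)*y) ((k:ℝ)) x := by
    intro k x
    simpa using (hasDerivAt_id x).const_mul (k:ℝ)
  have hcomp0 : ∀ (k : ℕ) (x : ℝ),
      HasDerivAt (fun y => A ((k:ℝ)*y)) ((k:ℝ) * Φ ((k:ℝ)*x)) x := by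
    intro k x
    have h := (hA ((k:ℝ)*x)).comp x (hlin k x)
    simp only [Function.comp_def] at h
    exact (mul_comm (Φ ((k:ℝ)*x)) (k:ℝ)) ▸ h
  have hcomp0' : ∀ (k : ℕ) (x : ℝ),
      HasDerivAt (fun y => (k:ℝ) * Φ ((k:ℝ)*y)) ((k:ℝ)^2 * ψ ((k:ℝ)*x)) x := by
    intro k x
    have h := ((hΦ' ((k:ℝ)*x)).comp x (hlin k x)).const_mul (k:ℝ)
    have h2 : (k:ℝ) * (ψ ((k:ℝ)*x) * (k:ℝ)) = (k:ℝ)^2 * ψ ((k:ℝ)*x) := by ring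
    simpa [Function.comp, h2] using h
  have hAk : ∀ (k : ℕ) (x : ℝ),
      HasDerivAt (fun y => A (y^k)) (Φ (x^k) * ((k:ℝ) * x^(k-1))) x := by
    intro k x
    have h := (hA (x^k)).comp x (hasDerivAt_pow k x)
    exact h
  have hG1 : ∀ (k : ℕ), 2 ≤ k → ∀ x : ℝ,
      HasDerivAt (fun y => (k:ℝ) * y^(k-1) * Φ (y^k)) (G2fun Φ ψ k x) x := by
    intro k hk2 x
    have h1 : HasDerivAt (fun y : ℝ => (k:ℝ)*y^(k-1)) ((k:ℝ) * (((k-1:ℕ):ℝ) * x^(k-1-1))) x :=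
      (hasDerivAt_pow (k-1) x).const_mul (k:ℝ)
    have h2 : HasDerivAt (fun y : ℝ => Φ (y^k)) (ψ (x^k) * ((k:ℝ)*x^(k-1))) x := by
      have := (hΦ' (x^k)).comp x (hasDerivAt_pow k x)
      exact this
    have h3 := h1.mul h2
    refine h3.congr_deriv ?_
    unfold G2fun
    rw [Nat.cast_sub (by omega : 1 ≤ k), show k-1-1 = k-2 from by omega,
      show 2*k-2 = (k-1)+(k-1) from by omega, pow_add]
    push_cast
    ring
  -- eventual facts
  have hev0 : ∀ᶠ k : ℕ in atTop, 3 ≤ k := eventually_ge_atTop 3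
  have hevp : ∀ᶠ k : ℕ in atTop, (3/5:ℝ)^k < ε :=
    (tendsto_pow_atTop_nhds_zero_of_lt_one (by norm_num) (by norm_num)).eventually
      (gt_mem_nhds hε)
  have hI1 : ∀ᶠ k : ℕ in atTop, (∫ x in (0:ℝ)..(1/2), (k:ℝ)^2 * ψ ((k:ℝ)*x)) = 0 := by
    filter_upwards [hev0] with k hk3
    have hk3' : (3:ℝ) ≤ (k:ℝ) := by exact_mod_cast hk3
    rw [integral_eq_sub_of_hasDerivAt (fun x _ => hcomp0' k x)
      ((by fun_prop : Continuous fun x => (k:ℝ)^2*ψ ((k:ℝ)*x)).intervalIntegrable _ _)]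
    have e1 : Φ ((k:ℝ)*(1/2)) = 0 := hΦ1 _ (by linarith)
    have e2 : Φ ((k:ℝ)*0) = 0 := by rw [mul_zero]; exact hΦ0 0 hε.le
    rw [e1, e2]
    ring
  have hI2 : ∀ᶠ k : ℕ in atTop,
      (∫ x in (0:ℝ)..(1/2), x * ((k:ℝ)^2 * ψ ((k:ℝ)*x))) = -1 := by
    filter_upwards [hev0] with k hk3
    have hk3' : (3:ℝ) ≤ (k:ℝ) := by exact_mod_cast hk3
    have hder : ∀ x ∈ Set.uIcc (0:ℝ) (1/2),
        HasDerivAt (fun y => y*((k:ℝ)*Φ ((k:ℝ)*y)) - A ((k:ℝ)*y))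
          (x*((k:ℝ)^2*ψ ((k:ℝ)*x))) x := by
      intro x _
      have h1 := (hasDerivAt_id x).mul (hcomp0' k x)
      have h2 := h1.sub (hcomp0 k x)
      refine h2.congr_deriv ?_
      simp only [id_eq]
      ring
    rw [integral_eq_sub_of_hasDerivAt hder
      ((by fun_prop : Continuous fun x => x*((k:ℝ)^2*ψ ((k:ℝ)*x))).intervalIntegrable _ _)]
    have e1 : Φ ((k:ℝ)*(1/2)) = 0 := hΦ1 _ (by linarith)
    have e2 : A ((k:ℝ)*(1/2)) = 1 := hA1 _ (by linarith)
    have e3 : A ((k:ℝ)*0) = 0 := by rw [mul_zero]; exact hA0 0 hε.le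
    rw [e1, e2, e3]
    ring
  have hpow12 : ∀ k : ℕ, ((1:ℝ)/2)^k ≤ (3/5)^k := fun k =>
    pow_le_pow_left₀ (by norm_num) (by norm_num) k
  have hJ0 : ∀ᶠ k : ℕ in atTop, (∫ x in (1/2:ℝ)..1, G2fun Φ ψ k x) = 0 := by
    filter_upwards [hev0, hevp] with k hk3 hkp
    rw [integral_eq_sub_of_hasDerivAt (fun x _ => hG1 k (by omega) x)
      ((G2cont Φ ψ k hΦc hψc).intervalIntegrable _ _)]
    have e1 : Φ ((1:ℝ)^k) = 0 := by rw [one_pow]; exact hΦ1 1 (by linarith)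
    have e2 : Φ (((1:ℝ)/2)^k) = 0 := hΦ0 _ (le_of_lt (lt_of_le_of_lt (hpow12 k) hkp))
    rw [e1, e2]
    ring
  have hJ1 : ∀ᶠ k : ℕ in atTop,
      (∫ x in (1/2:ℝ)..1, (x-1) * G2fun Φ ψ k x) = -1 := by
    filter_upwards [hev0, hevp] with k hk3 hkp
    have hder : ∀ x ∈ Set.uIcc (1/2:ℝ) 1,
        HasDerivAt (fun y => (y-1)*((k:ℝ)*y^(k-1)*Φ (y^k)) - A (y^k))
          ((x-1)*G2fun Φ ψ k x) x := by
      intro x _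
      have h1 := ((hasDerivAt_id x).sub_const 1).mul (hG1 k (by omega) x)
      have h2 := h1.sub (hAk k x)
      refine h2.congr_deriv ?_
      simp only [id_eq]
      ring
    rw [integral_eq_sub_of_hasDerivAt hder
      (((continuous_id.sub continuous_const).mul (G2cont Φ ψ k hΦc hψc)).intervalIntegrable _ _)]
    have e2 : Φ (((1:ℝ)/2)^k) = 0 := hΦ0 _ (le_of_lt (lt_of_le_of_lt (hpow12 k) hkp))
    have e3 : A (((1:ℝ)/2)^k) = 0 := hA0 _ (le_of_lt (lt_of_le_of_lt (hpow12 k) hkp))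
    have e4 : A ((1:ℝ)^k) = 1 := by rw [one_pow]; exact hA1 1 (by linarith)
    rw [e2, e3, e4]
    ring
  -- key piecewise identity
  have hkey : ∀ᶠ k : ℕ in atTop,
      (∫ x in (0:ℝ)..1, f x * deriv (deriv (hAux Φ k)) x)
        = (∫ x in (0:ℝ)..(1/2), f x * ((k:ℝ)^2 * ψ ((k:ℝ)*x)))
          + (∫ x in (1/2:ℝ)..1, f x * (-(G2fun Φ ψ k x))) := by
    filter_upwards [hev0, hevp] with k hk3 hkp
    have hk3' : (3:ℝ) ≤ (k:ℝ) := by exact_mod_cast hk3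
    have hU0 : ∀ x ∈ Set.Ioo (-(1/2):ℝ) (3/5), hAux Φ k x = A ((k:ℝ)*x) := by
      intro x hx
      simp only [hAux]
      rw [hB, haA]
      have hxa : |x| ≤ 3/5 := abs_le.mpr ⟨by linarith [hx.1], hx.2.le⟩
      have hz : A (x^k) = 0 := by
        apply hA0
        calc x^k ≤ |x^k| := le_abs_self _
          _ = |x|^k := abs_pow x k
          _ ≤ (3/5)^k := pow_le_pow_left₀ (abs_nonneg x) hxa k
          _ ≤ ε := hkp.le
      rw [hz]
      ring
    have hd0 : ∀ x ∈ Set.Ioo (-(1/2):ℝ) (3/5),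
        deriv (hAux Φ k) x = (k:ℝ) * Φ ((k:ℝ)*x) := by
      intro x hx
      have heq : hAux Φ k =ᶠ[𝓝 x] fun y => A ((k:ℝ)*y) :=
        Filter.eventually_of_mem (isOpen_Ioo.mem_nhds hx) hU0
      rw [heq.deriv_eq]
      exact (hcomp0 k x).deriv
    have hdd0 : ∀ x ∈ Set.Ioo (-(1/2):ℝ) (3/5),
        deriv (deriv (hAux Φ k)) x = (k:ℝ)^2 * ψ ((k:ℝ)*x) := by
      intro x hx
      have heq : deriv (hAux Φ k) =ᶠ[𝓝 x] fun y => (k:ℝ) * Φ ((k:ℝ)*y) :=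
        Filter.eventually_of_mem (isOpen_Ioo.mem_nhds hx) hd0
      rw [heq.deriv_eq]
      exact (hcomp0' k x).deriv
    have hU1 : ∀ x ∈ Set.Ioo (2/5:ℝ) 2, hAux Φ k x = 1 - A (x^k) := by
      intro x hx
      simp only [hAux]
      rw [hB, haA]
      have h1 : A ((k:ℝ)*x) = 1 := hA1 _ (by nlinarith [hx.1])
      rw [h1]
      ring
    have hd1 : ∀ x ∈ Set.Ioo (2/5:ℝ) 2,
        deriv (hAux Φ k) x = -((k:ℝ) * x^(k-1) * Φ (x^k)) := by
      intro x hx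
      have heq : hAux Φ k =ᶠ[𝓝 x] fun y => 1 - A (y^k) :=
        Filter.eventually_of_mem (isOpen_Ioo.mem_nhds hx) hU1
      rw [heq.deriv_eq]
      have h := (hAk k x).const_sub 1
      rw [h.deriv]
      ring
    have hdd1 : ∀ x ∈ Set.Ioo (2/5:ℝ) 2,
        deriv (deriv (hAux Φ k)) x = -(G2fun Φ ψ k x) := by
      intro x hx
      have heq : deriv (hAux Φ k) =ᶠ[𝓝 x] fun y => -((k:ℝ) * y^(k-1) * Φ (y^k)) :=
        Filter.eventually_of_mem (isOpen_Ioo.mem_nhds hx) hd1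
      rw [heq.deriv_eq]
      exact ((hG1 k (by omega) x).neg).deriv
    have hcdd : ContinuousOn (deriv (deriv (hAux Φ k))) (Set.Icc (0:ℝ) 1) := by
      intro x hx
      apply ContinuousAt.continuousWithinAt
      rcases lt_or_ge x (3/5) with h | h
      · have hxU : x ∈ Set.Ioo (-(1/2):ℝ) (3/5) := ⟨by linarith [hx.1], h⟩
        have heq : deriv (deriv (hAux Φ k)) =ᶠ[𝓝 x] fun y => (k:ℝ)^2 * ψ ((k:ℝ)*y) :=
          Filter.eventually_of_mem (isOpen_Ioo.mem_nhds hxU) hdd0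
        exact ((by fun_prop : Continuous fun y => (k:ℝ)^2 * ψ ((k:ℝ)*y)).continuousAt).congr
          heq.symm
      · have hxU : x ∈ Set.Ioo (2/5:ℝ) 2 := ⟨by linarith, by linarith [hx.2]⟩
        have heq : deriv (deriv (hAux Φ k)) =ᶠ[𝓝 x] fun y => -(G2fun Φ ψ k y) :=
          Filter.eventually_of_mem (isOpen_Ioo.mem_nhds hxU) hdd1
        exact ((G2cont Φ ψ k hΦc hψc).neg.continuousAt).congr heq.symm
    have hint1 : IntervalIntegrable (fun x => f x * deriv (deriv (hAux Φ k)) x)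
        volume 0 (1/2) := by
      apply ContinuousOn.intervalIntegrable
      apply ContinuousOn.mul
      · exact hf.mono (Set.uIcc_subset_Icc (by norm_num) (by norm_num))
      · exact hcdd.mono (Set.uIcc_subset_Icc (by norm_num) (by norm_num))
    have hint2 : IntervalIntegrable (fun x => f x * deriv (deriv (hAux Φ k)) x)
        volume (1/2) 1 := by
      apply ContinuousOn.intervalIntegrable
      apply ContinuousOn.mul
      · exact hf.mono (Set.uIcc_subset_Icc (by norm_num) (by norm_num))
      · exact hcdd.mono (Set.uIcc_subset_Icc (by norm_num) (by norm_num))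
    rw [← integral_add_adjacent_intervals hint1 hint2]
    congr 1
    · apply integral_congr
      intro x hx
      rw [Set.uIcc_of_le (by norm_num : (0:ℝ) ≤ 1/2)] at hx
      show f x * deriv (deriv (hAux Φ k)) x = f x * ((k:ℝ)^2 * ψ ((k:ℝ)*x))
      rw [hdd0 x ⟨by linarith [hx.1], by linarith [hx.2]⟩]
    · apply integral_congr
      intro x hx
      rw [Set.uIcc_of_le (by norm_num : (1/2:ℝ) ≤ 1)] at hx
      show f x * deriv (deriv (hAux Φ k)) x = f x * (-(G2fun Φ ψ k x))
      rw [hdd1 x ⟨by linarith [hx.1], by linarith [hx.2]⟩]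
  -- limits
  have hψone : ∀ t : ℝ, (1:ℝ) ≤ t → ψ t = 0 := fun t ht => hψ1 t (by linarith)
  have t0 := tendsto_near0 f ψ M' d0 hψc hM' hψone hf hf0 hI1 hI2
  have t1 := tendsto_near1 f Φ ψ 2 M' d1 ε hε hΦc hψc hΦbd hM' hΦ0 hψ0 hf hf1 hJ0 hJ1
  have hsum := t0.add t1
  rw [neg_add_eq_sub] at hsum
  apply hsum.congr'
  filter_upwards [hkey] with k hk
  exact hk.symm
end
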